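/- With δ(k,β) as above, for each fixed k ∈ ℕ the function β ↦ δ(k,β) is strictly increasing on [1, +∞); moreover δ(k,1) < 0 and δ(k,√2) > 0. Consequently, for each k ∈ ℕ there exists a unique βᶜ_k ∈ (1, √2) with δ(k, βᶜ_k) = 0. -/

import Mathlib

open Real

section helpers

-- Cauchy-type tangent-line inequality for sqrt(c - t^2)
lemma sqrt_tangent {c t u : ℝ} (hc : 0 ≤ c) (ht : t^2 ≤ c) (hu : u^2 < c) :
    Real.sqrt (c - t^2) ≤ (c - t*u) / Real.sqrt (c - u^2) := by
  have hbu : 0 < c - u^2 := by linarith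
  have hbs : 0 < Real.sqrt (c - u^2) := Real.sqrt_pos.mpr hbu
  rw [le_div_iff₀ hbs, ← Real.sqrt_mul (by linarith)]
  have h1 : (c - t^2) * (c - u^2) ≤ (c - t*u)^2 := by nlinarith [sq_nonneg (t - u)]
  have h2 : 0 ≤ c - t*u := by nlinarith [sq_nonneg (t - u), sq_nonneg (t + u)]
  calc Real.sqrt ((c - t^2) * (c - u^2)) ≤ Real.sqrt ((c - t*u)^2) := Real.sqrt_le_sqrt h1
    _ = c - t*u := Real.sqrt_sq h2

-- value lemma
lemma value_lemma {m β u : ℝ} (hβ : 1 ≤ β) (hu0 : 0 < u) (hu1 : u < 1)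
    (hcon : (m+1)*u/Real.sqrt (1 - u^2) + m*u/Real.sqrt (β^2 - u^2) = 1) :
    (m+1)/Real.sqrt (1 - u^2) + m*β^2/Real.sqrt (β^2 - u^2) =
      (m+1)*Real.sqrt (1 - u^2) + m*Real.sqrt (β^2 - u^2) + u := by
  have ha0 : 0 < 1 - u^2 := by nlinarith
  have hb0 : 0 < β^2 - u^2 := by nlinarith
  set a := Real.sqrt (1 - u^2) with hadef
  set b := Real.sqrt (β^2 - u^2) with hbdef
  have ha : a^2 = 1 - u^2 := Real.sq_sqrt ha0.le
  have hb : b^2 = β^2 - u^2 := Real.sq_sqrt hb0.le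
  have hap : 0 < a := Real.sqrt_pos.mpr ha0
  have hbp : 0 < b := Real.sqrt_pos.mpr hb0
  field_simp at hcon ⊢
  linear_combination u * hcon - (m+1)*b*ha - m*a*hb

-- max lemma: u (satisfying the stationarity constraint) is the max point
lemma max_lemma {m β u t : ℝ} (hm : 0 ≤ m) (hβ : 1 ≤ β) (hu0 : 0 < u) (hu1 : u < 1)
    (ht0 : 0 ≤ t) (ht1 : t ≤ 1)
    (hcon : (m+1)*u/Real.sqrt (1 - u^2) + m*u/Real.sqrt (β^2 - u^2) = 1) :
    (m+1)*Real.sqrt (1 - t^2) + m*Real.sqrt (β^2 - t^2) + t ≤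
      (m+1)*Real.sqrt (1 - u^2) + m*Real.sqrt (β^2 - u^2) + u := by
  have ha0 : 0 < 1 - u^2 := by nlinarith
  have hb0 : 0 < β^2 - u^2 := by nlinarith
  set a := Real.sqrt (1 - u^2) with hadef
  set b := Real.sqrt (β^2 - u^2) with hbdef
  have ha : a^2 = 1 - u^2 := Real.sq_sqrt ha0.le
  have hb : b^2 = β^2 - u^2 := Real.sq_sqrt hb0.le
  have hap : 0 < a := Real.sqrt_pos.mpr ha0
  have hbp : 0 < b := Real.sqrt_pos.mpr hb0
  have h1 : Real.sqrt (1 - t^2) ≤ (1 - t*u)/a :=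
    sqrt_tangent (by norm_num) (by nlinarith) (by nlinarith)
  have h2 : Real.sqrt (β^2 - t^2) ≤ (β^2 - t*u)/b :=
    sqrt_tangent (by nlinarith) (by nlinarith) (by nlinarith)
  have key : (m+1)*((1 - t*u)/a) + m*((β^2 - t*u)/b) + t =
      (m+1)*a + m*b + u := by
    field_simp
    field_simp at hcon
    linear_combination (u - t) * hcon - (m+1)*b*ha - m*a*hb
  nlinarith [mul_le_mul_of_nonneg_left h1 (by linarith : (0:ℝ) ≤ m+1),
    mul_le_mul_of_nonneg_left h2 hm]

noncomputable def Gfun (m β t : ℝ) : ℝ :=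
  (m+1)*Real.sqrt (1-t^2) + m*Real.sqrt (β^2-t^2) + t

lemma key_pos {K D A1 B1 A2 B2 : ℝ} (hK : 0 ≤ K) (hD : 0 < D)
    (hA1p : 0 < A1) (hB1p : 0 < B1) (hA2p : 0 < A2) (hB2p : 0 < B2)
    (e1 : A1^2 - B1^2 = D) (e2 : A2^2 - B2^2 = D)
    (key1 : K*A1 < (K+1)*A2) (key2 : K*B1 < (K+1)*B2) :
    K*(A2 - B2) < (K+1)*(A1 - B1) := by
  have h3 : A1 - B1 = D/(A1+B1) := by
    rw [eq_div_iff (by positivity)]; nlinarith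
  have h4 : A2 - B2 = D/(A2+B2) := by
    rw [eq_div_iff (by positivity)]; nlinarith
  rw [h3, h4, mul_div_assoc', mul_div_assoc', div_lt_div_iff₀ (by positivity) (by positivity)]
  nlinarith [mul_pos hD (add_pos hA2p hB2p)]

lemma aux_pos {b t : ℝ} (hb : 1 ≤ b) (ht0 : 0 < t) (ht1 : t < 1) : 0 < b^2 - t^2 := by
  nlinarith

lemma aux_pos1 {t : ℝ} (ht0 : 0 < t) (ht1 : t < 1) : 0 < 1 - t^2 := by nlinarith

lemma mono_main {K β β' t1 t2 s1 s2 : ℝ} (hK : 0 ≤ K) (hβ : 1 ≤ β) (hββ' : β < β')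
    (ht1 : 0 < t1) (ht1' : t1 < 1) (ht2 : 0 < t2) (ht2' : t2 < 1)
    (hs1 : 0 < s1) (hs1' : s1 < 1) (hs2 : 0 < s2) (hs2' : s2 < 1)
    (hct1 : (K+1+1)*t1/Real.sqrt (1-t1^2) + (K+1)*t1/Real.sqrt (β^2-t1^2) = 1)
    (hct2 : (K+1+1)*t2/Real.sqrt (1-t2^2) + (K+1)*t2/Real.sqrt (β'^2-t2^2) = 1)
    (hcs1 : (K+1)*s1/Real.sqrt (1-s1^2) + K*s1/Real.sqrt (β^2-s1^2) = 1)
    (hcs2 : (K+1)*s2/Real.sqrt (1-s2^2) + K*s2/Real.sqrt (β'^2-s2^2) = 1) :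
    Gfun (K+1) β t1 - Gfun K β s1 < Gfun (K+1) β' t2 - Gfun K β' s2 := by
  have hβ' : 1 ≤ β' := le_of_lt (lt_of_le_of_lt hβ hββ')
  have h1 := max_lemma (m := K+1) (by linarith) hβ' ht2 ht2' ht1.le ht1'.le hct2
  have h2 := max_lemma (m := K) hK hβ hs1 hs1' hs2.le hs2'.le hcs1
  have hA1sq : (Real.sqrt (β'^2 - t1^2))^2 = β'^2 - t1^2 :=
    Real.sq_sqrt (aux_pos hβ' ht1 ht1').le
  have hB1sq : (Real.sqrt (β^2 - t1^2))^2 = β^2 - t1^2 :=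
    Real.sq_sqrt (aux_pos hβ ht1 ht1').le
  have hA2sq : (Real.sqrt (β'^2 - s2^2))^2 = β'^2 - s2^2 :=
    Real.sq_sqrt (aux_pos hβ' hs2 hs2').le
  have hB2sq : (Real.sqrt (β^2 - s2^2))^2 = β^2 - s2^2 :=
    Real.sq_sqrt (aux_pos hβ hs2 hs2').le
  have hB1p : 0 < Real.sqrt (β^2 - t1^2) := Real.sqrt_pos.mpr (aux_pos hβ ht1 ht1')
  have hB2p : 0 < Real.sqrt (β^2 - s2^2) := Real.sqrt_pos.mpr (aux_pos hβ hs2 hs2')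
  have hA1p : 0 < Real.sqrt (β'^2 - t1^2) := Real.sqrt_pos.mpr (aux_pos hβ' ht1 ht1')
  have hA2p : 0 < Real.sqrt (β'^2 - s2^2) := Real.sqrt_pos.mpr (aux_pos hβ' hs2 hs2')
  have ha2 : 0 < Real.sqrt (1 - s2^2) := Real.sqrt_pos.mpr (aux_pos1 hs2 hs2')
  have ha2lt : Real.sqrt (1 - s2^2) < 1 := by
    calc Real.sqrt (1 - s2^2) < Real.sqrt 1 :=
          Real.sqrt_lt_sqrt (aux_pos1 hs2 hs2').le (by nlinarith only [sq_nonneg s2, hs2])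
      _ = 1 := Real.sqrt_one
  have hKs2 : (K+1)*s2 < 1 := by
    have hpos : 0 ≤ K*s2/Real.sqrt (β'^2 - s2^2) := by positivity
    have h5 : (K+1)*s2/Real.sqrt (1-s2^2) ≤ 1 := by linarith only [hpos, hcs2]
    rw [div_le_one ha2] at h5
    linarith only [h5, ha2lt]
  have hKs2sq : ((K+1)*s2)^2 < 1 := by
    have h0 : 0 ≤ (K+1)*s2 := by positivity
    nlinarith only [hKs2, h0]
  have key1 : K*Real.sqrt (β'^2 - t1^2) < (K+1)*Real.sqrt (β'^2 - s2^2) := by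
    have hsq : (K*Real.sqrt (β'^2 - t1^2))^2 < ((K+1)*Real.sqrt (β'^2 - s2^2))^2 := by
      rw [mul_pow, mul_pow, hA1sq, hA2sq]
      have hb2 : 1 ≤ β'^2 := by nlinarith only [hβ']
      nlinarith only [sq_nonneg (K*t1), mul_nonneg hK (sq_nonneg β'), hKs2sq, hb2, hK]
    exact lt_of_pow_lt_pow_left₀ 2 (by positivity) hsq
  have key2 : K*Real.sqrt (β^2 - t1^2) < (K+1)*Real.sqrt (β^2 - s2^2) := by
    have hsq : (K*Real.sqrt (β^2 - t1^2))^2 < ((K+1)*Real.sqrt (β^2 - s2^2))^2 := by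
      rw [mul_pow, mul_pow, hB1sq, hB2sq]
      have hb2 : 1 ≤ β^2 := by nlinarith only [hβ]
      nlinarith only [sq_nonneg (K*t1), mul_nonneg hK (sq_nonneg β), hKs2sq, hb2, hK]
    exact lt_of_pow_lt_pow_left₀ 2 (by positivity) hsq
  have hD : 0 < β'^2 - β^2 := by nlinarith only [hββ', hβ]
  have key := key_pos hK hD hA1p hB1p hA2p hB2p (by linarith only [hA1sq, hB1sq])
    (by linarith only [hA2sq, hB2sq]) key1 key2
  have key' : K*Real.sqrt (β'^2 - s2^2) - K*Real.sqrt (β^2 - s2^2)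
      < K*Real.sqrt (β'^2 - t1^2) + Real.sqrt (β'^2 - t1^2)
        - K*Real.sqrt (β^2 - t1^2) - Real.sqrt (β^2 - t1^2) := by linear_combination key
  simp only [Gfun]
  linarith only [h1, h2, key']

lemma sqrt2_pos {K b tk sk t0 s0 : ℝ} (hK : 0 ≤ K) (hb : 1 ≤ b) (hb2 : b^2 = 2)
    (htk0 : 0 < tk) (htk1 : tk < 1) (hsk0 : 0 < sk) (hsk1 : sk < 1)
    (ht00 : 0 < t0) (ht01 : t0 < 1) (hs00 : 0 < s0) (hs01 : s0 < 1)
    (hctk : (K+1+1)*tk/Real.sqrt (1-tk^2) + (K+1)*tk/Real.sqrt (b^2-tk^2) = 1)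
    (hct0 : (1+1)*t0/Real.sqrt (1-t0^2) + 1*t0/Real.sqrt (b^2-t0^2) = 1)
    (hcs0 : (0+1)*s0/Real.sqrt (1-s0^2) + 0*s0/Real.sqrt (b^2-s0^2) = 1) :
    Gfun K b sk + 2 < Gfun (K+1) b tk := by
  -- s0 = sqrt(1 - s0^2), hence Gfun 0 b s0 = 2*s0 = b
  have ha0 : 0 < 1 - s0^2 := aux_pos1 hs00 hs01
  have hap : 0 < Real.sqrt (1 - s0^2) := Real.sqrt_pos.mpr ha0
  have hasq : (Real.sqrt (1 - s0^2))^2 = 1 - s0^2 := Real.sq_sqrt ha0.le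
  have hs0eq : Real.sqrt (1 - s0^2) = s0 := by
    have h1 : s0/Real.sqrt (1 - s0^2) = 1 := by
      have := hcs0; simp only [zero_mul, zero_div, add_zero, zero_add, one_mul] at this; exact this
    field_simp at h1
    linarith only [h1]
  have hs0sq : 2*s0^2 = 1 := by
    have h := hasq
    rw [hs0eq] at h
    linarith only [h]
  have hZ : Gfun 0 b s0 = b := by
    simp only [Gfun, hs0eq]
    have h2s : (2*s0)^2 = b^2 := by rw [hb2]; nlinarith only [hs0sq]
    have h2b : 2*s0 = b := by
      nlinarith only [h2s, hb, hs00]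
    linarith only [h2b]
  -- max properties
  have h_t0a := max_lemma (m := 0) le_rfl hb hs00 hs01 ht00.le ht01.le hcs0
  have h_t0b := max_lemma (m := K+1) (by linarith) hb htk0 htk1 ht00.le ht01.le hctk
  have h_ska := max_lemma (m := 0) le_rfl hb hs00 hs01 hsk0.le hsk1.le hcs0
  have h_skb := max_lemma (m := K+1) (by linarith) hb htk0 htk1 hsk0.le hsk1.le hctk
  have h_third := max_lemma (m := 1) (by norm_num) hb ht00 ht01
    (by norm_num : (0:ℝ) ≤ 1/3) (by norm_num : (1/3:ℝ) ≤ 1) hct0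
  -- rewrite the max facts in terms of Gfun
  have g_t0a : Gfun 0 b t0 ≤ Gfun 0 b s0 := h_t0a
  have g_t0b : Gfun (K+1) b t0 ≤ Gfun (K+1) b tk := h_t0b
  have g_ska : Gfun 0 b sk ≤ Gfun 0 b s0 := h_ska
  have g_skb : Gfun (K+1) b sk ≤ Gfun (K+1) b tk := h_skb
  have g_third : Gfun 1 b (1/3) ≤ Gfun 1 b t0 := h_third
  have aff1 : (K+1)*Gfun 1 b t0 = K*Gfun 0 b t0 + Gfun (K+1) b t0 := by
    simp only [Gfun]; ring
  have aff2 : (K+1)*Gfun K b sk = Gfun 0 b sk + K*Gfun (K+1) b sk := by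
    simp only [Gfun]; ring
  have hp1 : K*Gfun 0 b t0 ≤ K*Gfun 0 b s0 := mul_le_mul_of_nonneg_left g_t0a hK
  have hp2 : K*Gfun (K+1) b sk ≤ K*Gfun (K+1) b tk := mul_le_mul_of_nonneg_left g_skb hK
  have hPQ : (K+1)*(Gfun 1 b t0 - Gfun 0 b s0) ≤
      (K+1)*(Gfun (K+1) b tk - Gfun K b sk) := by
    nlinarith only [aff1, aff2, hp1, hp2, g_t0b, g_ska]
  have hPQ' : Gfun 1 b t0 - Gfun 0 b s0 ≤ Gfun (K+1) b tk - Gfun K b sk :=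
    le_of_mul_le_mul_left hPQ (by linarith)
  -- numeric bound: Gfun 1 b (1/3) > b + 2
  have e89 : 1 - (1/3:ℝ)^2 = 8/9 := by norm_num
  have e179 : b^2 - (1/3:ℝ)^2 = 17/9 := by rw [hb2]; norm_num
  have h8 : (0.94:ℝ) < Real.sqrt (8/9) := by
    rw [show (0.94:ℝ) = Real.sqrt (0.94^2) by rw [Real.sqrt_sq]; norm_num]
    exact Real.sqrt_lt_sqrt (by norm_num) (by norm_num)
  have h17 : (1.37:ℝ) < Real.sqrt (17/9) := by
    rw [show (1.37:ℝ) = Real.sqrt (1.37^2) by rw [Real.sqrt_sq]; norm_num]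
    exact Real.sqrt_lt_sqrt (by norm_num) (by norm_num)
  have hble : b < 1.415 := by nlinarith only [hb, hb2]
  have hnum : b + 2 < Gfun 1 b (1/3) := by
    simp only [Gfun, e89, e179]
    nlinarith only [h8, h17, hble]
  have : b + 2 < Gfun 1 b t0 := lt_of_lt_of_le hnum g_third
  linarith only [this, hPQ', hZ]

lemma one_neg {K s t : ℝ} (hK : 0 ≤ K) (hs0 : 0 < s) (hs1 : s < 1) (ht0 : 0 < t) (ht1 : t < 1)
    (hcs : (K+1)*s/Real.sqrt (1-s^2) + K*s/Real.sqrt (1-s^2) = 1)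
    (hct : (K+2)*t/Real.sqrt (1-t^2) + (K+1)*t/Real.sqrt (1-t^2) = 1) :
    (K+2)/Real.sqrt (1-t^2) + (K+1)/Real.sqrt (1-t^2)
      - (K+1)/Real.sqrt (1-s^2) - K/Real.sqrt (1-s^2) - 2 < 0 := by
  have ha0 : 0 < 1 - s^2 := aux_pos1 hs0 hs1
  have hb0 : 0 < 1 - t^2 := aux_pos1 ht0 ht1
  have hap : 0 < Real.sqrt (1-s^2) := Real.sqrt_pos.mpr ha0
  have hbp : 0 < Real.sqrt (1-t^2) := Real.sqrt_pos.mpr hb0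
  have hasq : (Real.sqrt (1-s^2))^2 = 1 - s^2 := Real.sq_sqrt ha0.le
  have hbsq : (Real.sqrt (1-t^2))^2 = 1 - t^2 := Real.sq_sqrt hb0.le
  have haeq : Real.sqrt (1-s^2) = (2*K+1)*s := by
    field_simp at hcs
    linarith only [hcs]
  have hbeq : Real.sqrt (1-t^2) = (2*K+3)*t := by
    field_simp at hct
    linarith only [hct]
  have hs2 : ((2*K+1)*s)^2 = 1 - s^2 := by rw [← haeq]; exact hasq
  have ht2 : ((2*K+3)*t)^2 = 1 - t^2 := by rw [← hbeq]; exact hbsq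
  have hp2 : (1/s)^2 = 1 + (2*K+1)^2 := by
    field_simp
    nlinarith only [hs2, hs0]
  have hq2 : (1/t)^2 = 1 + (2*K+3)^2 := by
    field_simp
    nlinarith only [ht2, ht0]
  have hppos : 0 < 1/s := by positivity
  have hqpos : 0 < 1/t := by positivity
  have hPgt : 2*K+1 < 1/s := by nlinarith only [hp2, hppos, hK]
  have hQlt : 1/t < 1/s + 2 := by nlinarith only [hp2, hq2, hPgt, hppos, hqpos, hK]
  have e1 : (K+2)/Real.sqrt (1-t^2) + (K+1)/Real.sqrt (1-t^2) = 1/t := by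
    have h23 : (2*K+3) ≠ 0 := by positivity
    have htne : t ≠ 0 := ne_of_gt ht0
    rw [hbeq]
    field_simp
    ring
  have e2 : (K+1)/Real.sqrt (1-s^2) + K/Real.sqrt (1-s^2) = 1/s := by
    have h21 : (2*K+1) ≠ 0 := by positivity
    have hsne : s ≠ 0 := ne_of_gt hs0
    rw [haeq]
    field_simp
    ring
  linarith only [e1, e2, hQlt]

lemma sqrt_subadd {x y : ℝ} (hx : 0 ≤ x) (hy : 0 ≤ y) :
    Real.sqrt (x+y) ≤ Real.sqrt x + Real.sqrt y := by
  have h := Real.sqrt_le_sqrt (show x + y ≤ (Real.sqrt x + Real.sqrt y)^2 by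
    nlinarith only [Real.sq_sqrt hx, Real.sq_sqrt hy,
      mul_nonneg (Real.sqrt_nonneg x) (Real.sqrt_nonneg y)])
  rwa [Real.sqrt_sq (by positivity)] at h

lemma cont_bound {K β β' t1 t2 s1 s2 : ℝ} (hK : 0 ≤ K) (hβ : 1 ≤ β) (hle : β ≤ β')
    (ht1 : 0 < t1) (ht1' : t1 < 1) (ht2 : 0 < t2) (ht2' : t2 < 1)
    (hs1 : 0 < s1) (hs1' : s1 < 1) (hs2 : 0 < s2) (hs2' : s2 < 1)
    (hct1 : (K+1+1)*t1/Real.sqrt (1-t1^2) + (K+1)*t1/Real.sqrt (β^2-t1^2) = 1)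
    (hcs2 : (K+1)*s2/Real.sqrt (1-s2^2) + K*s2/Real.sqrt (β'^2-s2^2) = 1) :
    Gfun (K+1) β' t2 - Gfun K β' s2 - (Gfun (K+1) β t1 - Gfun K β s1) ≤
      (K+1)*Real.sqrt (β'^2 - β^2) := by
  have hβ' : 1 ≤ β' := le_trans hβ hle
  have hDn : 0 ≤ β'^2 - β^2 := by nlinarith only [hle, hβ]
  -- sqrt(β'^2 - t2^2) ≤ sqrt(β^2 - t2^2) + sqrt(β'^2 - β^2)
  have hsub : Real.sqrt (β'^2 - t2^2) ≤ Real.sqrt (β^2 - t2^2) + Real.sqrt (β'^2 - β^2) := by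
    have h := sqrt_subadd (aux_pos hβ ht2 ht2').le hDn
    rw [show β^2 - t2^2 + (β'^2 - β^2) = β'^2 - t2^2 by ring] at h
    exact h
  have hmax1 := max_lemma (m := K+1) (by linarith) hβ ht1 ht1' ht2.le ht2'.le hct1
  have hmax2 := max_lemma (m := K) hK hβ' hs2 hs2' hs1.le hs1'.le hcs2
  have hmono : Real.sqrt (β^2 - s1^2) ≤ Real.sqrt (β'^2 - s1^2) :=
    Real.sqrt_le_sqrt (by nlinarith only [hle, hβ])
  have hKmono : K*Real.sqrt (β^2 - s1^2) ≤ K*Real.sqrt (β'^2 - s1^2) :=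
    mul_le_mul_of_nonneg_left hmono hK
  have hKsub : (K+1+1)*Real.sqrt (1-t2^2) + (K+1)*Real.sqrt (β'^2 - t2^2) + t2 ≤
      (K+1+1)*Real.sqrt (1-t2^2) + (K+1)*Real.sqrt (β^2 - t2^2) + t2
        + (K+1)*Real.sqrt (β'^2 - β^2) := by
    nlinarith only [hsub, hK]
  simp only [Gfun]
  linarith only [hKsub, hmax1, hmax2, hKmono]

end helpers

theorem stmt_12 (σ τ : ℕ → ℝ → ℝ)
    (hσrange : ∀ (k : ℕ) (β : ℝ), 1 ≤ β → σ k β ∈ Set.Ioo (0 : ℝ) 1)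
    (hτrange : ∀ (k : ℕ) (β : ℝ), 1 ≤ β → τ k β ∈ Set.Ioo (0 : ℝ) 1)
    (hσeq : ∀ (k : ℕ) (β : ℝ), 1 ≤ β →
      ((k : ℝ) + 1) * σ k β / Real.sqrt (1 - (σ k β) ^ 2)
        + (k : ℝ) * σ k β / Real.sqrt (β ^ 2 - (σ k β) ^ 2) = 1)
    (hτeq : ∀ (k : ℕ) (β : ℝ), 1 ≤ β →
      ((k : ℝ) + 2) * τ k β / Real.sqrt (1 - (τ k β) ^ 2)
        + ((k : ℝ) + 1) * τ k β / Real.sqrt (β ^ 2 - (τ k β) ^ 2) = 1)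
    (δ : ℕ → ℝ → ℝ)
    (hδ : ∀ (k : ℕ) (β : ℝ), 1 ≤ β →
      δ k β = ((k : ℝ) + 2) / Real.sqrt (1 - (τ k β) ^ 2)
        + ((k : ℝ) + 1) * β ^ 2 / Real.sqrt (β ^ 2 - (τ k β) ^ 2)
        - ((k : ℝ) + 1) / Real.sqrt (1 - (σ k β) ^ 2)
        - (k : ℝ) * β ^ 2 / Real.sqrt (β ^ 2 - (σ k β) ^ 2) - 2) :
    ∀ k : ℕ, StrictMonoOn (δ k) (Set.Ici 1) ∧
      δ k 1 < 0 ∧ 0 < δ k (Real.sqrt 2) ∧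
      ∃! β : ℝ, β ∈ Set.Ioo 1 (Real.sqrt 2) ∧ δ k β = 0 := by
  intro k
  have hK : (0:ℝ) ≤ (k:ℝ) := Nat.cast_nonneg k
  -- representation of δ via Gfun
  have rep : ∀ β : ℝ, 1 ≤ β →
      δ k β = Gfun ((k:ℝ)+1) β (τ k β) - Gfun (k:ℝ) β (σ k β) - 2 := by
    intro β hβ
    obtain ⟨hσ0, hσ1⟩ := hσrange k β hβ
    obtain ⟨hτ0, hτ1⟩ := hτrange k β hβ
    have v1 := value_lemma (m := (k:ℝ)+1) hβ hτ0 hτ1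
      (by linear_combination hτeq k β hβ)
    have v2 := value_lemma (m := (k:ℝ)) hβ hσ0 hσ1 (hσeq k β hβ)
    rw [hδ k β hβ]
    simp only [Gfun]
    linear_combination v1 - v2
  -- strict monotonicity
  have hmono : StrictMonoOn (δ k) (Set.Ici 1) := by
    intro β hβ β' hβ' hlt
    have hβ1 : 1 ≤ β := hβ
    have hβ'1 : 1 ≤ β' := hβ'
    obtain ⟨hσ0, hσ1⟩ := hσrange k β hβ1
    obtain ⟨hτ0, hτ1⟩ := hτrange k β hβ1
    obtain ⟨hσ0', hσ1'⟩ := hσrange k β' hβ'1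
    obtain ⟨hτ0', hτ1'⟩ := hτrange k β' hβ'1
    rw [rep β hβ1, rep β' hβ'1]
    have h := mono_main (K := (k:ℝ)) hK hβ1 hlt hτ0 hτ1 hτ0' hτ1' hσ0 hσ1 hσ0' hσ1'
      (by linear_combination hτeq k β hβ1)
      (by linear_combination hτeq k β' hβ'1)
      (hσeq k β hβ1) (hσeq k β' hβ'1)
    linarith only [h]
  -- δ k 1 < 0
  have hneg : δ k 1 < 0 := by
    obtain ⟨hσ0, hσ1⟩ := hσrange k 1 le_rfl
    obtain ⟨hτ0, hτ1⟩ := hτrange k 1 le_rfl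
    have e1 : ((1:ℝ)^2 - (σ k 1)^2) = 1 - (σ k 1)^2 := by norm_num
    have e2 : ((1:ℝ)^2 - (τ k 1)^2) = 1 - (τ k 1)^2 := by norm_num
    have hcs := hσeq k 1 le_rfl
    have hct := hτeq k 1 le_rfl
    rw [e1] at hcs
    rw [e2] at hct
    have h := one_neg (K := (k:ℝ)) hK hσ0 hσ1 hτ0 hτ1
      (by linear_combination hcs) (by linear_combination hct)
    rw [hδ k 1 le_rfl, e1, e2]
    have eβ : ((1:ℝ)^2) = 1 := one_pow 2
    rw [eβ]
    have e3 : ((k:ℝ)+1)*1/Real.sqrt (1 - (τ k 1)^2) = ((k:ℝ)+1)/Real.sqrt (1 - (τ k 1)^2) := by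
      ring
    have e4 : (k:ℝ)*1/Real.sqrt (1 - (σ k 1)^2) = (k:ℝ)/Real.sqrt (1 - (σ k 1)^2) := by
      ring
    rw [e3, e4]
    linarith only [h]
  -- 1 ≤ sqrt 2 and related facts
  have h12 : (1:ℝ) ≤ Real.sqrt 2 := by
    nlinarith [Real.sq_sqrt (show (0:ℝ) ≤ 2 by norm_num), Real.sqrt_nonneg 2]
  have h12' : (1:ℝ) < Real.sqrt 2 := by
    nlinarith [Real.sq_sqrt (show (0:ℝ) ≤ 2 by norm_num), Real.sqrt_nonneg 2]
  have hb2 : (Real.sqrt 2)^2 = 2 := Real.sq_sqrt (by norm_num)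
  -- δ k (sqrt 2) > 0
  have hpos : 0 < δ k (Real.sqrt 2) := by
    obtain ⟨hσ0, hσ1⟩ := hσrange k (Real.sqrt 2) h12
    obtain ⟨hτ0, hτ1⟩ := hτrange k (Real.sqrt 2) h12
    obtain ⟨hσ00, hσ01⟩ := hσrange 0 (Real.sqrt 2) h12
    obtain ⟨hτ00, hτ01⟩ := hτrange 0 (Real.sqrt 2) h12
    have h := sqrt2_pos (K := (k:ℝ)) (b := Real.sqrt 2)
      (tk := τ k (Real.sqrt 2)) (sk := σ k (Real.sqrt 2))
      (t0 := τ 0 (Real.sqrt 2)) (s0 := σ 0 (Real.sqrt 2))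
      hK h12 hb2 hτ0 hτ1 hσ0 hσ1 hτ00 hτ01 hσ00 hσ01
      (by linear_combination hτeq k (Real.sqrt 2) h12)
      (by have := hτeq 0 (Real.sqrt 2) h12; push_cast at this; linear_combination this)
      (by have := hσeq 0 (Real.sqrt 2) h12; push_cast at this; linear_combination this)
    rw [rep (Real.sqrt 2) h12]
    linarith only [h]
  refine ⟨hmono, hneg, hpos, ?_⟩
  -- continuity on Icc 1 (sqrt 2)
  have hbnd : ∀ x y : ℝ, 1 ≤ x → x ≤ y →
      δ k y - δ k x ≤ ((k:ℝ)+1)*Real.sqrt (y^2 - x^2) := by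
    intro x y hx hxy
    have hy : 1 ≤ y := le_trans hx hxy
    obtain ⟨hσ0, hσ1⟩ := hσrange k x hx
    obtain ⟨hτ0, hτ1⟩ := hτrange k x hx
    obtain ⟨hσ0', hσ1'⟩ := hσrange k y hy
    obtain ⟨hτ0', hτ1'⟩ := hτrange k y hy
    rw [rep x hx, rep y hy]
    have h := cont_bound (K := (k:ℝ)) hK hx hxy hτ0 hτ1 hτ0' hτ1' hσ0 hσ1 hσ0' hσ1'
      (by linear_combination hτeq k x hx) (hσeq k y hy)
    linarith only [h]
  have hmono' : ∀ x y : ℝ, 1 ≤ x → x ≤ y → 0 ≤ δ k y - δ k x := by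
    intro x y hx hxy
    rcases eq_or_lt_of_le hxy with h | h
    · simp [h]
    · have := hmono (show x ∈ Set.Ici 1 from hx)
        (show y ∈ Set.Ici 1 from le_trans hx hxy) h
      linarith only [this]
  have hsqrt2le : Real.sqrt 2 ≤ 1.5 := by
    nlinarith [Real.sq_sqrt (show (0:ℝ) ≤ 2 by norm_num), Real.sqrt_nonneg 2]
  have hcont : ContinuousOn (δ k) (Set.Icc 1 (Real.sqrt 2)) := by
    rw [Metric.continuousOn_iff]
    intro b hb ε hε
    set C : ℝ := (k:ℝ)+1 with hC
    have hCpos : 0 < C := by positivity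
    refine ⟨ε^2/(3*C^2), by positivity, ?_⟩
    intro a ha hdist
    rw [Real.dist_eq] at hdist ⊢
    -- generic estimate for ordered pair
    have key : ∀ x y : ℝ, x ∈ Set.Icc 1 (Real.sqrt 2) → y ∈ Set.Icc 1 (Real.sqrt 2) →
        x ≤ y → |y - x| < ε^2/(3*C^2) → |δ k y - δ k x| < ε := by
      intro x y hxm hym hxy hd
      have hx1 : 1 ≤ x := hxm.1
      have habs : |y - x| = y - x := abs_of_nonneg (by linarith only [hxy])
      rw [habs] at hd
      have hylt : y ≤ 1.5 := le_trans hym.2 hsqrt2le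
      have hsum : x + y ≤ 3 := by
        have := hxm.2
        linarith only [hylt, le_trans hxm.2 hsqrt2le]
      have hsq : y^2 - x^2 < (ε/C)^2 := by
        have h1 : y^2 - x^2 = (y - x)*(y + x) := by ring
        have h2 : (y - x)*(y + x) ≤ (y - x)*3 := by
          apply mul_le_mul_of_nonneg_left _ (by linarith only [hxy])
          linarith only [hsum]
        have h3 : (y - x)*3 < 3*(ε^2/(3*C^2)) := by linarith only [hd]
        have h4 : 3*(ε^2/(3*C^2)) = (ε/C)^2 := by
          field_simp
        linarith only [h1.le, h2, h3, h4.le, h1.ge]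
      have hsqrtlt : Real.sqrt (y^2 - x^2) < ε/C := by
        have hεC : 0 < ε/C := by positivity
        rcases le_or_gt (y^2 - x^2) 0 with hneg' | hpos'
        · rw [Real.sqrt_eq_zero'.mpr hneg']
          exact hεC
        · have := Real.sqrt_lt_sqrt (le_of_lt hpos') hsq
          rwa [Real.sqrt_sq hεC.le] at this
      have hub := hbnd x y hx1 hxy
      have hlb := hmono' x y hx1 hxy
      have : δ k y - δ k x < C*(ε/C) := by
        calc δ k y - δ k x ≤ C*Real.sqrt (y^2 - x^2) := hub
          _ < C*(ε/C) := by
            apply mul_lt_mul_of_pos_left hsqrtlt hCpos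
      rw [abs_of_nonneg hlb]
      calc δ k y - δ k x < C*(ε/C) := this
        _ = ε := by field_simp
    rcases le_total a b with h | h
    · have := key a b ha hb h (by rwa [abs_sub_comm] at hdist)
      rwa [abs_sub_comm]
    · exact key b a hb ha h hdist
  -- existence via IVT
  have hivt := intermediate_value_Ioo h12 hcont
  have h0mem : (0:ℝ) ∈ Set.Ioo (δ k 1) (δ k (Real.sqrt 2)) := ⟨hneg, hpos⟩
  obtain ⟨β₀, hβ₀mem, hβ₀⟩ := hivt h0mem
  refine ⟨β₀, ⟨hβ₀mem, hβ₀⟩, ?_⟩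
  rintro y ⟨hymem, hy⟩
  exact hmono.injOn (show y ∈ Set.Ici 1 from le_of_lt hymem.1)
    (show β₀ ∈ Set.Ici 1 from le_of_lt hβ₀mem.1) (by rw [hy, hβ₀])
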